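/- Let A be a linear operator on ℂ^T and α a linear operator on ℂ^{Ω×ℤ}. Then: (i) A is of weak type (1,1) with respect to μ if and only if ΦAΦ* is of weak type (1,1) with respect to ν×#, and the weak (1,1) norms are equal; (ii) for every p ∈ [1,∞], A is bounded on L^p(μ) if and only if ΦAΦ* is bounded on L^p(ν×#), and the operator norms are equal; (iii) for every p ∈ [1,∞], if α is bounded on L^p(ν×#), then Φ*αΦ is bounded on L^p(μ) with operator norm not greater than that of α. -/

import Mathlib

open MeasureTheory ENNReal Set Function
open scoped NNReal ENNReal Classical

noncomputable section

/-- A homogeneous tree of degree `q+1` with a distinguished end (mythical ancestor),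
encoded through its graph distance `dist`, horocyclic level function `level`,
and predecessor map `pred`. -/
structure FlowTree (q : ℕ) where
  V : Type
  countableV : Countable V
  dist : V → V → ℕ
  level : V → ℤ
  pred : V → V
  dist_self : ∀ x, dist x x = 0
  eq_of_dist_eq_zero : ∀ x y, dist x y = 0 → x = y
  dist_comm : ∀ x y, dist x y = dist y x
  dist_triangle : ∀ x y z, dist x z ≤ dist x y + dist y z
  level_pred : ∀ x, level (pred x) = level x + 1
  succ_finite : ∀ x, Set.Finite {y | pred y = x}
  succ_card : ∀ x, Nat.card {y // pred y = x} = q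
  dist_le : ∀ (x y : V) (n m : ℕ), pred^[n] x = pred^[m] y → dist x y ≤ n + m
  dist_spec : ∀ x y, ∃ n m : ℕ, pred^[n] x = pred^[m] y ∧ n + m = dist x y

namespace FlowTree

variable {q : ℕ} (S : FlowTree q)

/-- The canonical flow measure weight `μ(x) = q^{ℓ(x)}`, as an extended nonnegative real. -/
def w (x : S.V) : ℝ≥0∞ := (q : ℝ≥0∞) ^ ((S.level x : ℤ) : ℝ)

/-- The canonical flow measure weight `μ(x) = q^{ℓ(x)}`, as a real number. -/
def wR (x : S.V) : ℝ := (q : ℝ) ^ (S.level x)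

/-- The canonical flow measure of a set `E ⊆ T`. -/
def muS (E : Set S.V) : ℝ≥0∞ := ∑' x : E, S.w x

/-- The `L^p(μ)` (quasi)norm, `p ∈ [1,∞]`. -/
def lpNorm (p : ℝ≥0∞) {E : Type*} [NNNorm E] (f : S.V → E) : ℝ≥0∞ :=
  if p = ∞ then ⨆ x, (‖f x‖₊ : ℝ≥0∞)
  else (∑' x, (‖f x‖₊ : ℝ≥0∞) ^ p.toReal * S.w x) ^ (1 / p.toReal)

/-- The weak `L^{1,∞}(μ)` quasinorm `sup_{λ>0} λ · μ({|f| > λ})`. -/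
def wkNorm {E : Type*} [NNNorm E] (f : S.V → E) : ℝ≥0∞ :=
  ⨆ t : ℝ≥0, (t : ℝ≥0∞) * S.muS {x | t < ‖f x‖₊}

/-- `Σf(x) = f(𝔭(x))`. -/
def sig (f : S.V → ℂ) : S.V → ℂ := fun x => f (S.pred x)

/-- `Σ*f(x) = (1/q) Σ_{y ∈ succ(x)} f(y)`. -/
def sigStar (f : S.V → ℂ) : S.V → ℂ :=
  fun x => (q : ℂ)⁻¹ * ∑' y : {y | S.pred y = x}, f y.1

/-- The flow gradient `∇ = id − Σ`. -/
def grad (f : S.V → ℂ) : S.V → ℂ := fun x => f x - f (S.pred x)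

/-- `∇* = id − Σ*`. -/
def gradStar (f : S.V → ℂ) : S.V → ℂ := fun x => f x - S.sigStar f x

/-- The modulus of the gradient `Df(x) = Σ_{y ∼ x} |f(x) − f(y)|`. -/
def Dmod (f : S.V → ℂ) : S.V → ℝ :=
  fun x => ∑' y : {y | S.dist x y = 1}, ‖f x - f y.1‖

/-- `Σ̃_n = Σ^n` for `n ≥ 0` and `(Σ*)^{−n}` for `n < 0`. -/
def sigTilde (n : ℤ) (f : S.V → ℂ) : S.V → ℂ :=
  if 0 ≤ n then (S.sig)^[n.toNat] f else (S.sigStar)^[(-n).toNat] f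

/-- `Σ*` acting on real-valued functions. -/
def sigStarR (f : S.V → ℝ) : S.V → ℝ :=
  fun x => (q : ℝ)⁻¹ * ∑' y : {y | S.pred y = x}, f y.1

/-- The flow Laplacian `𝓛 = id − (Σ + Σ*)/2`, acting pointwise on real functions. -/
def lapR (f : S.V → ℝ) : S.V → ℝ :=
  fun x => f x - (f (S.pred x) + S.sigStarR f x) / 2

/-- `δ_y/μ(y)`, the normalized delta at `y`. -/
def deltaMu (y : S.V) : S.V → ℝ := fun z => if z = y then (S.wR y)⁻¹ else 0

/-- The heat kernel `H_t(x,y)` of the flow Laplacian, i.e. `(e^{−t𝓛} (δ_y/μ(y)))(x)`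
computed via the exponential power series of the bounded operator `𝓛`. -/
def Hker (t : ℝ) (x y : S.V) : ℝ :=
  ∑' n : ℕ, ((-t) ^ n / (n.factorial : ℝ)) * ((S.lapR)^[n] (S.deltaMu y)) x

/-- The integral kernel `K(x,y)` of `𝓛^{−1/2}`, by subordination. -/
def Kker (x y : S.V) : ℝ :=
  (Real.sqrt Real.pi)⁻¹ * ∫ t in Set.Ioi (0 : ℝ), S.Hker t x y * t ^ (-(1 : ℝ)/2)

/-- The Riesz transform `𝓡 = ∇𝓛^{−1/2}`, defined on finitely supported functions. -/
def riesz (f : S.V → ℂ) : S.V → ℂ :=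
  fun x => ∑' y, ((S.Kker x y - S.Kker (S.pred x) y : ℝ) : ℂ) * f y * (S.wR y : ℂ)

/-- The integral operator with almost-radial kernel `q^{−ℓ(x)/2} G(d(x,y)) q^{−ℓ(y)/2}`. -/
def kernelOp (G : ℕ → ℂ) (f : S.V → ℂ) : S.V → ℂ :=
  fun x => ∑' y, (((q : ℝ) ^ (-((S.level x : ℤ) : ℝ)/2) * (q : ℝ) ^ (-((S.level y : ℤ) : ℝ)/2) : ℝ) : ℂ)
    * G (S.dist x y) * f y * (S.wR y : ℂ)

/-- The ε-horizontal gradient `∇_ε f(x) = (1/q) Σ_{y ∈ succ(x)} ε(y) f(y)`. -/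
def hgrad (ε f : S.V → ℂ) : S.V → ℂ :=
  fun x => (q : ℂ)⁻¹ * ∑' y : {y | S.pred y = x}, ε y.1 * f y.1

/-- The adjoint ε-horizontal gradient `∇_ε* f(x) = conj(ε(x)) f(𝔭(x))`. -/
def hgradStar (ε f : S.V → ℂ) : S.V → ℂ :=
  fun x => (starRingEnd ℂ) (ε x) * f (S.pred x)

/-- `‖ε‖_∞`. -/
def epsSup (ε : S.V → ℂ) : ℝ≥0∞ := ⨆ x, (‖ε x‖₊ : ℝ≥0∞)

/-- The `L²(μ)` inner product. -/
def inner2 (f g : S.V → ℂ) : ℂ := ∑' x, f x * (starRingEnd ℂ) (g x) * (S.wR x : ℂ)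

/-- `y ≤ x` iff `d(x,y) = ℓ(x) − ℓ(y)`. -/
def le' (y x : S.V) : Prop := (S.dist x y : ℤ) = S.level x - S.level y

/-- Admissible trapezoids of `(T,μ)`. -/
def IsAdmissibleTrapezoid (F : Set S.V) : Prop :=
  (∃ x, F = {x}) ∨
  ∃ (x₀ : S.V) (h1 h2 : ℕ), 0 < h1 ∧ 2 * h1 ≤ h2 ∧ h2 ≤ 12 * h1 ∧
    F = {x | S.le' x x₀ ∧ S.level x₀ - (h2 : ℤ) < S.level x ∧ S.level x ≤ S.level x₀ - (h1 : ℤ)}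

/-- `(1,∞)`-atoms of `(T,μ)`. -/
def IsOneInftyAtom (a : S.V → ℂ) : Prop :=
  ∃ F : Set S.V, S.IsAdmissibleTrapezoid F ∧ Function.support a ⊆ F ∧
    (∑' x, a x * (S.wR x : ℂ)) = 0 ∧ ∀ x, (‖a x‖₊ : ℝ≥0∞) ≤ (S.muS F)⁻¹

end FlowTree

namespace ZRiesz

/-- The discrete Laplacian on `ℤ`. -/
def deltaZ (F : ℤ → ℝ) : ℤ → ℝ := fun n => F n - (F (n + 1) + F (n - 1)) / 2

/-- The heat kernel `h_t^ℤ = e^{−tΔ_ℤ} δ_0` on `ℤ`, via the exponential power series. -/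
def heatZ (t : ℝ) (n : ℤ) : ℝ :=
  ∑' k : ℕ, ((-t) ^ k / (k.factorial : ℝ)) *
    (deltaZ^[k] (fun m => if m = 0 then (1 : ℝ) else 0)) n

/-- Kernel of the Riesz transform on `ℤ`: `k_ℤ(n) = π^{−1/2} ∫₀^∞ (∇_ℤ h_t^ℤ)(n) t^{−1/2} dt`. -/
def kZ (n : ℤ) : ℝ :=
  (Real.sqrt Real.pi)⁻¹ * ∫ t in Set.Ioi (0 : ℝ), (heatZ t n - heatZ t (n + 1)) * t ^ (-(1 : ℝ)/2)

/-- Kernel of the skew-symmetric part: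
`k̃_ℤ(n) = π^{−1/2} ∫₀^∞ (∇̃_ℤ h_t^ℤ)(n) t^{−1/2} dt`. -/
def ktZ (n : ℤ) : ℝ :=
  (Real.sqrt Real.pi)⁻¹ *
    ∫ t in Set.Ioi (0 : ℝ), (heatZ t (n - 1) - heatZ t (n + 1)) * t ^ (-(1 : ℝ)/2)

/-- The closed formula `k̃_ℤ(m) = (2√2/π) m/(m² − 1/4)`. -/
def ktZc (m : ℤ) : ℝ := (2 * Real.sqrt 2 / Real.pi) * (m : ℝ) / ((m : ℝ) ^ 2 - 1/4)

/-- `G(n) = Σ_{k≥0} q^{−(n+2k)/2} k̃_ℤ(n+2k+1)` (subordination kernel version). -/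
def Gint (q : ℕ) (n : ℕ) : ℝ :=
  ∑' k : ℕ, (q : ℝ) ^ (-(((n : ℝ)) + 2 * (k : ℝ))/2) * ktZ ((n : ℤ) + 2 * (k : ℤ) + 1)

/-- `G(n) = Σ_{k≥0} q^{−(n+2k)/2} k̃_ℤ(n+2k+1)` (closed formula version). -/
def Gc (q : ℕ) (n : ℕ) : ℝ :=
  ∑' k : ℕ, (q : ℝ) ^ (-(((n : ℝ)) + 2 * (k : ℝ))/2) * ktZc ((n : ℤ) + 2 * (k : ℤ) + 1)

/-- The `ℓ^p(ℤ)` norm. -/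
def zlpNorm (p : ℝ≥0∞) (F : ℤ → ℂ) : ℝ≥0∞ :=
  if p = ∞ then ⨆ n, (‖F n‖₊ : ℝ≥0∞)
  else (∑' n : ℤ, (‖F n‖₊ : ℝ≥0∞) ^ p.toReal) ^ (1 / p.toReal)

/-- The `ℓ^{1,∞}(ℕ)` quasinorm. -/
def natWk (F : ℕ → ℂ) : ℝ≥0∞ :=
  ⨆ t : ℝ≥0, (t : ℝ≥0∞) * ∑' (_ : {n : ℕ | t < ‖F n‖₊}), (1 : ℝ≥0∞)

end ZRiesz

/-- The punctured boundary `Ω = ∂T \ {ω_*}` of the tree, together with the measure `ν`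
with `ν(Ω_x) = q^{ℓ(x)}`.  `vert ω n` is the vertex `ω_n` of level `n` on the geodesic
`[ω, ω_*]`. -/
structure FlowTreeBoundary {q : ℕ} (S : FlowTree q) where
  Ω : Type
  mΩ : MeasurableSpace Ω
  ν : @MeasureTheory.Measure Ω mΩ
  vert : Ω → ℤ → S.V
  level_vert : ∀ ω n, S.level (vert ω n) = n
  pred_vert : ∀ ω n, S.pred (vert ω n) = vert ω (n + 1)
  vert_surj : ∀ x : S.V, ∃ ω, vert ω (S.level x) = x
  vert_inj : ∀ ω ω', (∀ n, vert ω n = vert ω' n) → ω = ω'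
  meas_cone : ∀ x : S.V, @MeasurableSet Ω mΩ {ω | vert ω (S.level x) = x}
  nu_cone : ∀ x : S.V, ν {ω | vert ω (S.level x) = x} = (q : ℝ≥0∞) ^ ((S.level x : ℤ) : ℝ)

attribute [instance] FlowTreeBoundary.mΩ

namespace FlowTreeBoundary

variable {q : ℕ} {S : FlowTree q} (B : FlowTreeBoundary S)

/-- The product measure `ν × #` on `Ω × ℤ`. -/
def pm : MeasureTheory.Measure (B.Ω × ℤ) := B.ν.prod MeasureTheory.Measure.count

/-- `Ω_x = {ω : x ∈ [ω, ω_*]}`. -/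
def cone (x : S.V) : Set B.Ω := {ω | B.vert ω (S.level x) = x}

/-- The lifting operator `Φf(ω,n) = f(ω_n)`. -/
def lift (f : S.V → ℂ) : B.Ω × ℤ → ℂ := fun p => f (B.vert p.1 p.2)

/-- The lifting operator on `ℝ≥0∞`-valued functions. -/
def liftNN (f : S.V → ℝ≥0∞) : B.Ω × ℤ → ℝ≥0∞ := fun p => f (B.vert p.1 p.2)

/-- The adjoint `Φ*g(x) = ν(Ω_x)^{−1} ∫_{Ω_x} g(ω, ℓ(x)) dν(ω)`. -/
def liftStar (g : B.Ω × ℤ → ℂ) : S.V → ℂ :=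
  fun x => ((B.ν (B.cone x)).toReal)⁻¹ * ∫ ω in B.cone x, g (ω, S.level x) ∂B.ν

/-- The adjoint `Φ*` on `ℝ≥0∞`-valued functions. -/
def liftStarNN (g : B.Ω × ℤ → ℝ≥0∞) : S.V → ℝ≥0∞ :=
  fun x => (B.ν (B.cone x))⁻¹ * ∫⁻ ω in B.cone x, g (ω, S.level x) ∂B.ν

end FlowTreeBoundary

/-- The weak `L^{1,∞}(μ)` quasinorm with respect to a measure. -/
def wkMeas {α : Type*} [MeasurableSpace α] (μ : MeasureTheory.Measure α) (g : α → ℂ) : ℝ≥0∞ :=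
  ⨆ t : ℝ≥0, (t : ℝ≥0∞) * μ {a | t < ‖g a‖₊}

/-- The weak `L^{1,∞}(μ)` quasinorm for `ℝ≥0∞`-valued functions. -/
def wkMeasNN {α : Type*} [MeasurableSpace α] (μ : MeasureTheory.Measure α) (g : α → ℝ≥0∞) :
    ℝ≥0∞ :=
  ⨆ t : ℝ≥0, (t : ℝ≥0∞) * μ {a | (t : ℝ≥0∞) < g a}

end
noncomputable section Aux

open MeasureTheory ENNReal Set Function

namespace LiftAux

instance : SFinite (Measure.count : Measure ℤ) := by
  rw [show (Measure.count : Measure ℤ) = Measure.sum Measure.dirac from rfl]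
  infer_instance

variable {q : ℕ} {S : FlowTree q} (B : FlowTreeBoundary S)

lemma countV : Countable S.V := S.countableV

lemma qne0 (hq : 2 ≤ q) : (q : ℝ≥0∞) ≠ 0 := by
  simp only [ne_eq, Nat.cast_eq_zero]; omega

lemma qnetop : (q : ℝ≥0∞) ≠ ∞ := ENNReal.natCast_ne_top q

lemma w_ne_zero (hq : 2 ≤ q) (x : S.V) : S.w x ≠ 0 := by
  simp only [FlowTree.w, ne_eq, ENNReal.rpow_eq_zero_iff, not_or, not_and]
  exact ⟨fun h => absurd h (qne0 hq), fun h => absurd h (qnetop)⟩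

lemma w_ne_top (hq : 2 ≤ q) (x : S.V) : S.w x ≠ ∞ := by
  simp only [FlowTree.w, ne_eq, ENNReal.rpow_eq_top_iff, not_or, not_and]
  exact ⟨fun h => absurd h (qne0 hq), fun h => absurd h (qnetop)⟩

lemma nu_cone' (x : S.V) : B.ν (B.cone x) = S.w x := B.nu_cone x

lemma meas_cone' (x : S.V) : MeasurableSet (B.cone x) := B.meas_cone x

lemma mem_cone_self (ω : B.Ω) (n : ℤ) : ω ∈ B.cone (B.vert ω n) := by
  show B.vert ω (S.level (B.vert ω n)) = B.vert ω n
  rw [B.level_vert]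

lemma cone_eq_of_mem {x y : S.V} {ω : B.Ω} (hx : ω ∈ B.cone x) (hy : ω ∈ B.cone y)
    (h : S.level x = S.level y) : x = y := by
  have hx' : B.vert ω (S.level x) = x := hx
  have hy' : B.vert ω (S.level y) = y := hy
  rw [← hx', ← hy', h]

lemma pairwise_prod :
    Pairwise (Disjoint on fun x : S.V => B.cone x ×ˢ ({S.level x} : Set ℤ)) := by
  intro x y hxy
  rw [Function.onFun, Set.disjoint_left]
  rintro ⟨ω, m⟩ ⟨h1, h2⟩ ⟨h1', h2'⟩
  simp only [mem_singleton_iff] at h2 h2'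
  exact hxy (cone_eq_of_mem B h1 h1' (h2 ▸ h2' ▸ rfl))

lemma pairwise_cone (n : ℤ) :
    Pairwise (Disjoint on fun x : {x : S.V // S.level x = n} => B.cone x.1) := by
  intro x y hxy
  rw [Function.onFun, Set.disjoint_left]
  intro ω h1 h1'
  exact hxy (Subtype.ext (cone_eq_of_mem B h1 h1' (x.2.trans y.2.symm)))

lemma iUnion_cone (n : ℤ) :
    ⋃ x : {x : S.V // S.level x = n}, B.cone x.1 = univ := by
  rw [eq_univ_iff_forall]
  intro ω
  exact mem_iUnion.2 ⟨⟨B.vert ω n, B.level_vert ω n⟩, mem_cone_self B ω n⟩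

lemma sf_nu (hq : 2 ≤ q) : SigmaFinite B.ν := by
  haveI := countV (S := S)
  apply Measure.sigmaFinite_of_countable (countable_range fun x : S.V => B.cone x)
  · rintro s ⟨x, rfl⟩
    rw [nu_cone' B x]
    exact (w_ne_top hq x).lt_top
  · rw [sUnion_range, eq_univ_iff_forall]
    intro ω
    exact mem_iUnion.2 ⟨B.vert ω 0, mem_cone_self B ω 0⟩

lemma pm_eq (hq : 2 ≤ q) : B.pm = Measure.sum (fun n : ℤ => Measure.map (fun ω => (ω, n)) B.ν) := by
  haveI := sf_nu B hq
  rw [FlowTreeBoundary.pm,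
    show (Measure.count : Measure ℤ) = Measure.sum Measure.dirac from rfl,
    Measure.prod_sum_right]
  congr 1
  funext n
  exact Measure.prod_dirac n

lemma lintegral_pm (hq : 2 ≤ q) (F : B.Ω × ℤ → ℝ≥0∞) :
    ∫⁻ p, F p ∂B.pm = ∑' n : ℤ, ∫⁻ ω, F (ω, n) ∂B.ν := by
  rw [pm_eq B hq, lintegral_sum_measure]
  exact tsum_congr fun n => (measurableEmbedding_prod_mk_right n).lintegral_map F

lemma lintegral_level (n : ℤ) (G : B.Ω → ℝ≥0∞) :
    ∫⁻ ω, G ω ∂B.ν = ∑' x : {x : S.V // S.level x = n}, ∫⁻ ω in B.cone x.1, G ω ∂B.ν := by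
  haveI := countV (S := S)
  conv_lhs => rw [← Measure.restrict_univ (μ := B.ν), ← iUnion_cone B n,
    Measure.restrict_iUnion (pairwise_cone B n) (fun x => meas_cone' B _),
    lintegral_sum_measure]

lemma setLIntegral_cone (x : S.V) (ψ : S.V → ℝ≥0∞) :
    ∫⁻ ω in B.cone x, ψ (B.vert ω (S.level x)) ∂B.ν = ψ x * S.w x := by
  rw [setLIntegral_congr_fun_ae (meas_cone' B x)
    (ae_of_all _ fun ω (hω : B.vert ω (S.level x) = x) => by rw [hω] :
      ∀ᵐ ω ∂B.ν, ω ∈ B.cone x → ψ (B.vert ω (S.level x)) = (fun _ => ψ x) ω),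
    setLIntegral_const, nu_cone' B x]

/-- Sigma-reindexing of vertices by level. -/
def levelEquiv (S : FlowTree q) : (Σ n : ℤ, {x : S.V // S.level x = n}) ≃ S.V where
  toFun := fun p => p.2.1
  invFun := fun x => ⟨S.level x, x, rfl⟩
  left_inv := by rintro ⟨n, x, rfl⟩; rfl
  right_inv := fun x => rfl

lemma tsum_levels (g : S.V → ℝ≥0∞) :
    ∑' x : S.V, g x = ∑' (n : ℤ), ∑' x : {x : S.V // S.level x = n}, g x.1 := by
  rw [← (levelEquiv S).tsum_eq g]
  exact ENNReal.tsum_sigma fun n (x : {x : S.V // S.level x = n}) => g x.1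

lemma lintegral_lift_level (n : ℤ) (φ : S.V → ℝ≥0∞) :
    ∫⁻ ω, φ (B.vert ω n) ∂B.ν = ∑' x : {x : S.V // S.level x = n}, φ x.1 * S.w x.1 := by
  rw [lintegral_level B n]
  refine tsum_congr fun x => ?_
  obtain ⟨x, hx⟩ := x
  subst hx
  exact setLIntegral_cone B x φ

lemma lintegral_liftNN (hq : 2 ≤ q) (φ : S.V → ℝ≥0∞) :
    ∫⁻ p, φ (B.vert p.1 p.2) ∂B.pm = ∑' x, φ x * S.w x := by
  rw [lintegral_pm B hq]
  simp_rw [lintegral_lift_level B]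
  exact (tsum_levels fun x => φ x * S.w x).symm

lemma pm_lift_superlevel (hq : 2 ≤ q) (P : S.V → Prop) :
    B.pm {p : B.Ω × ℤ | P (B.vert p.1 p.2)} = ∑' x : {x : S.V // P x}, S.w x.1 := by
  haveI := countV (S := S)
  haveI := sf_nu B hq
  have hE : {p : B.Ω × ℤ | P (B.vert p.1 p.2)}
      = ⋃ x : {x : S.V // P x}, B.cone x.1 ×ˢ ({S.level x.1} : Set ℤ) := by
    ext ⟨ω, m⟩
    simp only [mem_setOf_eq, mem_iUnion, mem_prod, mem_singleton_iff]
    constructor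
    · intro h
      exact ⟨⟨B.vert ω m, h⟩, mem_cone_self B ω m, (B.level_vert ω m).symm⟩
    · rintro ⟨⟨x, hx⟩, h1, rfl⟩
      have h1' : B.vert ω (S.level x) = x := h1
      rwa [h1']
  rw [hE, measure_iUnion
    (f := fun x : {x : S.V // P x} => B.cone x.1 ×ˢ ({S.level x.1} : Set ℤ))
    (fun i j hij => pairwise_prod B (Subtype.coe_ne_coe.2 hij))
    (fun x => (meas_cone' B _).prod (measurableSet_singleton _))]
  refine tsum_congr fun x => ?_
  rw [FlowTreeBoundary.pm, Measure.prod_prod, nu_cone' B, Measure.count_singleton, mul_one]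

lemma pm_cone (hq : 2 ≤ q) (x : S.V) : B.pm (B.cone x ×ˢ ({S.level x} : Set ℤ)) = S.w x := by
  haveI := sf_nu B hq
  rw [FlowTreeBoundary.pm, Measure.prod_prod, nu_cone' B, Measure.count_singleton, mul_one]

lemma wk_lift (hq : 2 ≤ q) (h : S.V → ℂ) : wkMeas B.pm (B.lift h) = S.wkNorm h := by
  refine iSup_congr fun t => ?_
  congr 1
  exact pm_lift_superlevel B hq (fun x => t < ‖h x‖₊)
lemma lp_lift_finite {p : ℝ≥0∞} (hq : 2 ≤ q) (hp : 1 ≤ p) (hptop : p ≠ ∞) (f : S.V → ℂ) :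
    eLpNorm (B.lift f) p B.pm = S.lpNorm p f := by
  have hp0 : p ≠ 0 := (zero_lt_one.trans_le hp).ne'
  rw [eLpNorm_eq_lintegral_rpow_enorm_toReal hp0 hptop, FlowTree.lpNorm, if_neg hptop]
  congr 1
  exact lintegral_liftNN B hq (fun x => (‖f x‖₊ : ℝ≥0∞) ^ p.toReal)

lemma lp_lift_top (hq : 2 ≤ q) (f : S.V → ℂ) :
    eLpNorm (B.lift f) ∞ B.pm = S.lpNorm ∞ f := by
  rw [eLpNorm_exponent_top, FlowTree.lpNorm, if_pos rfl]
  refine le_antisymm (essSup_le_of_ae_le _ (ae_of_all _ fun p =>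
    le_iSup (fun x => (‖f x‖₊ : ℝ≥0∞)) (B.vert p.1 p.2))) (iSup_le fun x => ?_)
  by_contra hlt
  push_neg at hlt
  have hae := _root_.ae_le_essSup (μ := B.pm) (f := fun p => (‖B.lift f p‖₊ : ℝ≥0∞))
  rw [MeasureTheory.ae_iff] at hae
  have hsub : B.cone x ×ˢ ({S.level x} : Set ℤ)
      ⊆ {p : B.Ω × ℤ | ¬ (‖B.lift f p‖₊ : ℝ≥0∞) ≤ essSup (fun p => (‖B.lift f p‖₊ : ℝ≥0∞)) B.pm} := by
    rintro ⟨ω, m⟩ ⟨h1, h2⟩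
    simp only [mem_singleton_iff] at h2
    subst h2
    have h1' : B.vert ω (S.level x) = x := h1
    simp only [mem_setOf_eq, FlowTreeBoundary.lift, h1', not_le]
    exact hlt
  have := measure_mono_null hsub hae
  rw [pm_cone B hq] at this
  exact w_ne_zero hq x this

lemma lp_lift {p : ℝ≥0∞} (hq : 2 ≤ q) (hp : 1 ≤ p) (f : S.V → ℂ) :
    eLpNorm (B.lift f) p B.pm = S.lpNorm p f := by
  rcases eq_or_ne p ∞ with rfl | hptop
  · exact lp_lift_top B hq f
  · exact lp_lift_finite B hq hp hptop f

lemma liftStar_lift (hq : 2 ≤ q) (f : S.V → ℂ) : B.liftStar (B.lift f) = f := by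
  funext x
  have ha : (B.ν (B.cone x)).toReal ≠ 0 := by
    rw [nu_cone' B x]
    exact ENNReal.toReal_ne_zero.2 ⟨w_ne_zero hq x, w_ne_top hq x⟩
  rw [FlowTreeBoundary.liftStar,
    setIntegral_congr_fun (meas_cone' B x)
      (fun ω (hω : B.vert ω (S.level x) = x) => by
        show B.lift f (ω, S.level x) = f x
        rw [FlowTreeBoundary.lift, hω]),
    setIntegral_const]
  rw [Complex.real_smul]
  push_cast
  have ha' : ((B.ν (B.cone x)).toReal : ℂ) ≠ 0 := by exact_mod_cast ha
  field_simp
  rfl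

lemma enorm_liftStar_le (hq : 2 ≤ q) (g : B.Ω × ℤ → ℂ) (x : S.V) :
    (‖B.liftStar g x‖₊ : ℝ≥0∞)
      ≤ (S.w x)⁻¹ * ∫⁻ ω in B.cone x, (‖g (ω, S.level x)‖₊ : ℝ≥0∞) ∂B.ν := by
  set a := (B.ν (B.cone x)).toReal with hadef
  have ha : 0 < a := by
    rw [hadef, nu_cone' B x]
    exact ENNReal.toReal_pos (w_ne_zero hq x) (w_ne_top hq x)
  rw [FlowTreeBoundary.liftStar]
  calc (‖(↑(a⁻¹) : ℂ) * ∫ ω in B.cone x, g (ω, S.level x) ∂B.ν‖₊ : ℝ≥0∞)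
      = (‖(↑(a⁻¹) : ℂ)‖₊ : ℝ≥0∞) * (‖∫ ω in B.cone x, g (ω, S.level x) ∂B.ν‖₊ : ℝ≥0∞) := by
        rw [nnnorm_mul]; push_cast; ring
    _ ≤ (S.w x)⁻¹ * ∫⁻ ω in B.cone x, (‖g (ω, S.level x)‖₊ : ℝ≥0∞) ∂B.ν := by
        refine mul_le_mul' (le_of_eq ?_) (enorm_integral_le_lintegral_enorm _)
        rw [Complex.nnnorm_real, ← enorm_eq_nnnorm, Real.enorm_eq_ofReal (inv_nonneg.2 ha.le),
          ENNReal.ofReal_inv_of_pos ha, hadef, ENNReal.ofReal_toReal, nu_cone' B x]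
        rw [nu_cone' B x]
        exact w_ne_top hq x

lemma holder_set {α : Type*} [MeasurableSpace α] (μ : Measure α) {s : Set α}
    (hs : MeasurableSet s) (h : α → ℝ≥0∞) {r : ℝ} (hr : 1 ≤ r) :
    ∫⁻ a in s, h a ∂μ ≤ (∫⁻ a in s, h a ^ r ∂μ) ^ (1/r) * μ s ^ (1 - 1/r) := by
  rcases eq_or_lt_of_le hr with h1 | h1
  · rw [← h1]
    simp [ENNReal.rpow_one]
  · have hpq := Real.HolderConjugate.conjExponent h1
    have hinv : 1 / Real.conjExponent r = 1 - 1/r := by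
      have := hpq.inv_add_inv_eq_one
      rw [one_div, one_div]
      linarith
    rw [← iSup_lintegral_measurable_le_eq_lintegral (μ := μ.restrict s) (fun a => h a)]
    refine iSup_le fun g => iSup_le fun hg => iSup_le fun hgh => ?_
    have key := ENNReal.lintegral_mul_le_Lp_mul_Lq (μ.restrict s) hpq
      hg.aemeasurable (aemeasurable_const (b := (1:ℝ≥0∞)))
    simp only [Pi.mul_apply, mul_one, ENNReal.one_rpow, lintegral_const,
      Measure.restrict_apply MeasurableSet.univ, univ_inter, one_mul] at key
    refine key.trans ?_
    rw [hinv]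
    refine mul_le_mul' (ENNReal.rpow_le_rpow (lintegral_mono fun a =>
      ENNReal.rpow_le_rpow (hgh a) (zero_le_one.trans hr)) (by positivity)) le_rfl

lemma ae_nu_le_essSup (hq : 2 ≤ q) (g : B.Ω × ℤ → ℂ) (n : ℤ) :
    ∀ᵐ ω ∂B.ν, (‖g (ω, n)‖₊ : ℝ≥0∞) ≤ eLpNormEssSup g B.pm := by
  have hae := _root_.ae_le_essSup (μ := B.pm) (f := fun p => (‖g p‖₊ : ℝ≥0∞))
  rw [MeasureTheory.ae_iff] at hae ⊢
  have hle : Measure.map (fun ω => (ω, n)) B.ν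
      {p : B.Ω × ℤ | ¬ (‖g p‖₊ : ℝ≥0∞) ≤ essSup (fun p => (‖g p‖₊ : ℝ≥0∞)) B.pm} = 0 := by
    refine le_antisymm (le_trans ?_ hae.le) (zero_le')
    rw [pm_eq B hq]
    exact Measure.le_iff'.1 (Measure.le_sum _ n) _
  rw [(measurableEmbedding_prod_mk_right n).map_apply] at hle
  exact hle

lemma liftStar_lp_le_top (hq : 2 ≤ q) (g : B.Ω × ℤ → ℂ) :
    S.lpNorm ∞ (B.liftStar g) ≤ eLpNorm g ∞ B.pm := by
  rw [eLpNorm_exponent_top, FlowTree.lpNorm, if_pos rfl]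
  refine iSup_le fun x => (enorm_liftStar_le B hq g x).trans ?_
  have hb : ∫⁻ ω in B.cone x, (‖g (ω, S.level x)‖₊ : ℝ≥0∞) ∂B.ν
      ≤ eLpNormEssSup g B.pm * S.w x := by
    calc ∫⁻ ω in B.cone x, (‖g (ω, S.level x)‖₊ : ℝ≥0∞) ∂B.ν
        ≤ ∫⁻ _ in B.cone x, eLpNormEssSup g B.pm ∂B.ν :=
          lintegral_mono_ae (ae_restrict_of_ae (ae_nu_le_essSup B hq g (S.level x)))
      _ = eLpNormEssSup g B.pm * S.w x := by rw [setLIntegral_const, nu_cone' B x]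
  calc (S.w x)⁻¹ * ∫⁻ ω in B.cone x, (‖g (ω, S.level x)‖₊ : ℝ≥0∞) ∂B.ν
      ≤ (S.w x)⁻¹ * (eLpNormEssSup g B.pm * S.w x) := mul_le_mul' le_rfl hb
    _ = eLpNormEssSup g B.pm := by
        rw [mul_comm (eLpNormEssSup g B.pm), ← mul_assoc,
          ENNReal.inv_mul_cancel (w_ne_zero hq x) (w_ne_top hq x), one_mul]

lemma liftStar_lp_le (hq : 2 ≤ q) {p : ℝ≥0∞} (hp : 1 ≤ p) (g : B.Ω × ℤ → ℂ) :
    S.lpNorm p (B.liftStar g) ≤ eLpNorm g p B.pm := by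
  rcases eq_or_ne p ∞ with rfl | hptop
  · exact liftStar_lp_le_top B hq g
  have hp0 : p ≠ 0 := (zero_lt_one.trans_le hp).ne'
  set r := p.toReal with hrdef
  have hr : 1 ≤ r := by
    rw [hrdef, ← ENNReal.toReal_one]
    exact ENNReal.toReal_mono hptop hp
  have hr0 : r ≠ 0 := by positivity
  set J : S.V → ℝ≥0∞ :=
    fun x => ∫⁻ ω in B.cone x, (‖g (ω, S.level x)‖₊ : ℝ≥0∞) ^ r ∂B.ν with hJ
  have hterm : ∀ x : S.V, (‖B.liftStar g x‖₊ : ℝ≥0∞) ^ r * S.w x ≤ J x := by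
    intro x
    have h1 : (‖B.liftStar g x‖₊ : ℝ≥0∞) ≤ (S.w x)⁻¹ * ((J x) ^ (1/r) * S.w x ^ (1 - 1/r)) :=
      (enorm_liftStar_le B hq g x).trans (mul_le_mul' le_rfl
        (by rw [← nu_cone' B x] at *
            exact holder_set B.ν (meas_cone' B x) (fun ω => (‖g (ω, S.level x)‖₊ : ℝ≥0∞)) hr))
    have h2 : ((S.w x)⁻¹ * ((J x) ^ (1/r) * S.w x ^ (1 - 1/r))) ^ r * S.w x = J x := by
      have hw0 := w_ne_zero hq x
      have hwt := w_ne_top hq x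
      rw [ENNReal.mul_rpow_of_nonneg _ _ (by positivity : (0:ℝ) ≤ r),
        ENNReal.mul_rpow_of_nonneg _ _ (by positivity : (0:ℝ) ≤ r),
        ← ENNReal.rpow_mul (J x), one_div_mul_cancel hr0, ENNReal.rpow_one,
        ← ENNReal.rpow_neg_one (S.w x), ← ENNReal.rpow_mul, ← ENNReal.rpow_mul]
      calc (S.w x) ^ ((-1:ℝ) * r) * (J x * S.w x ^ ((1 - 1/r) * r)) * S.w x
          = J x * (S.w x ^ ((-1:ℝ) * r) * S.w x ^ ((1 - 1/r) * r) * S.w x) := by ring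
        _ = J x := by
            rw [← ENNReal.rpow_add _ _ hw0 hwt,
              show (-1:ℝ) * r + (1 - 1/r) * r = -1 by field_simp; ring,
              ENNReal.rpow_neg_one, ENNReal.inv_mul_cancel hw0 hwt, mul_one]
    calc (‖B.liftStar g x‖₊ : ℝ≥0∞) ^ r * S.w x
        ≤ ((S.w x)⁻¹ * ((J x) ^ (1/r) * S.w x ^ (1 - 1/r))) ^ r * S.w x :=
          mul_le_mul' (ENNReal.rpow_le_rpow h1 (by positivity)) le_rfl
      _ = J x := h2
  have hsum : ∑' x, J x = ∫⁻ p', (‖g p'‖₊ : ℝ≥0∞) ^ r ∂B.pm := by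
    rw [lintegral_pm B hq (fun p' => (‖g p'‖₊ : ℝ≥0∞) ^ r), tsum_levels (g := J)]
    refine tsum_congr fun n => ?_
    rw [lintegral_level B n (fun ω => (‖g (ω, n)‖₊ : ℝ≥0∞) ^ r)]
    refine tsum_congr fun x => ?_
    obtain ⟨x, hx⟩ := x
    subst hx
    rfl
  rw [eLpNorm_eq_lintegral_rpow_enorm_toReal hp0 hptop, FlowTree.lpNorm, if_neg hptop]
  simp only [enorm_eq_nnnorm]
  rw [← hsum]
  exact ENNReal.rpow_le_rpow (ENNReal.tsum_le_tsum hterm) (by positivity)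

end LiftAux

end Aux
/-- transference of weak type `(1,1)` and strong `L^p` bounds between a linear
operator `A` on `ℂ^T` and its lifting `ΦAΦ*`, and from a linear operator `α` on
`ℂ^{Ω×ℤ}` to `Φ*αΦ`. -/
theorem lifting_transference {q : ℕ} (hq : 2 ≤ q) (S : FlowTree q) (B : FlowTreeBoundary S)
    (A : (S.V → ℂ) →ₗ[ℂ] (S.V → ℂ)) (alpha : (B.Ω × ℤ → ℂ) →ₗ[ℂ] (B.Ω × ℤ → ℂ)) :
    (∀ C : ℝ≥0∞,
      (∀ f : S.V → ℂ, S.wkNorm (A f) ≤ C * S.lpNorm 1 f) ↔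
      (∀ g : B.Ω × ℤ → ℂ, wkMeas B.pm (B.lift (A (B.liftStar g))) ≤
        C * MeasureTheory.eLpNorm g 1 B.pm)) ∧
    (∀ p : ℝ≥0∞, 1 ≤ p → ∀ C : ℝ≥0∞,
      (∀ f : S.V → ℂ, S.lpNorm p (A f) ≤ C * S.lpNorm p f) ↔
      (∀ g : B.Ω × ℤ → ℂ, MeasureTheory.eLpNorm (B.lift (A (B.liftStar g))) p B.pm ≤
        C * MeasureTheory.eLpNorm g p B.pm)) ∧
    (∀ p : ℝ≥0∞, 1 ≤ p → ∀ C : ℝ≥0∞,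
      (∀ g : B.Ω × ℤ → ℂ, MeasureTheory.eLpNorm (alpha g) p B.pm ≤
        C * MeasureTheory.eLpNorm g p B.pm) →
      ∀ f : S.V → ℂ, S.lpNorm p (B.liftStar (alpha (B.lift f))) ≤ C * S.lpNorm p f) := by
  have wk_lift := LiftAux.wk_lift B hq
  have lp_lift := fun (p : ℝ≥0∞) (hp : 1 ≤ p) => LiftAux.lp_lift B hq hp
  have lsl := LiftAux.liftStar_lift B hq
  have lsle := fun (p : ℝ≥0∞) (hp : 1 ≤ p) => LiftAux.liftStar_lp_le B hq hp
  refine ⟨fun C => ⟨fun hA g => ?_, fun hα f => ?_⟩,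
    fun p hp C => ⟨fun hA g => ?_, fun hα f => ?_⟩, fun p hp C hα f => ?_⟩
  · calc wkMeas B.pm (B.lift (A (B.liftStar g))) = S.wkNorm (A (B.liftStar g)) :=
          wk_lift _
    _ ≤ C * S.lpNorm 1 (B.liftStar g) := hA _
    _ ≤ C * eLpNorm g 1 B.pm := mul_le_mul' le_rfl (lsle 1 le_rfl g)
  · calc S.wkNorm (A f) = wkMeas B.pm (B.lift (A (B.liftStar (B.lift f)))) := by
          rw [lsl f]; exact (wk_lift _).symm
    _ ≤ C * eLpNorm (B.lift f) 1 B.pm := hα _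
    _ = C * S.lpNorm 1 f := by rw [lp_lift 1 le_rfl f]
  · calc eLpNorm (B.lift (A (B.liftStar g))) p B.pm = S.lpNorm p (A (B.liftStar g)) :=
          lp_lift p hp _
    _ ≤ C * S.lpNorm p (B.liftStar g) := hA _
    _ ≤ C * eLpNorm g p B.pm := mul_le_mul' le_rfl (lsle p hp g)
  · calc S.lpNorm p (A f) = eLpNorm (B.lift (A (B.liftStar (B.lift f)))) p B.pm := by
          rw [lsl f]; exact (lp_lift p hp _).symm
    _ ≤ C * eLpNorm (B.lift f) p B.pm := hα _
    _ = C * S.lpNorm p f := by rw [lp_lift p hp f]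
  · calc S.lpNorm p (B.liftStar (alpha (B.lift f))) ≤ eLpNorm (alpha (B.lift f)) p B.pm :=
          lsle p hp _
    _ ≤ C * eLpNorm (B.lift f) p B.pm := hα _
    _ = C * S.lpNorm p f := by rw [lp_lift p hp f]
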